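/- Let A ∈ ℤ[z] with deg(A) = r_a and leading coefficient α, d ≥ 2 an integer, and b ∈ ℝ with |b| > 1 such that A(b^{d^t}) ≠ 0 for all integers t ≥ 0. Then there exist constants 0 < c < C such that c ≤ |∏_{t=0}^{m-1} A(b^{d^t})| / (|α|^m |b|^{r_a (d^m - 1)/(d-1)}) ≤ C for all m ≥ 1. -/

import Mathlib

noncomputable section
open Polynomial

private lemma poly_eval_bound (p : Polynomial ℝ) (x : ℝ) (hx : 1 ≤ |x|) :
    |p.eval x| ≤ (∑ i ∈ Finset.range (p.natDegree + 1), |p.coeff i|) * |x| ^ p.natDegree := by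
  rw [Polynomial.eval_eq_sum_range]
  calc |∑ i ∈ Finset.range (p.natDegree + 1), p.coeff i * x ^ i|
      ≤ ∑ i ∈ Finset.range (p.natDegree + 1), |p.coeff i * x ^ i| :=
        Finset.abs_sum_le_sum_abs _ _
    _ ≤ ∑ i ∈ Finset.range (p.natDegree + 1), |p.coeff i| * |x| ^ p.natDegree := by
        refine Finset.sum_le_sum fun i hi => ?_
        rw [abs_mul, abs_pow]
        exact mul_le_mul_of_nonneg_left
          (pow_le_pow_right₀ hx (Nat.lt_succ_iff.mp (Finset.mem_range.mp hi))) (abs_nonneg _)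
    _ = _ := (Finset.sum_mul _ _ _).symm

private lemma abs_log_le_two_mul {ρ : ℝ} (h : |ρ - 1| ≤ 1 / 2) :
    |Real.log ρ| ≤ 2 * |ρ - 1| := by
  have h1 : (1:ℝ)/2 ≤ ρ := by
    have := (abs_le.mp h).1
    linarith
  have hρ : 0 < ρ := by linarith
  rw [abs_le]
  constructor
  · have hinv : Real.log ρ⁻¹ ≤ ρ⁻¹ - 1 := Real.log_le_sub_one_of_pos (by positivity)
    rw [Real.log_inv] at hinv
    have hinv2 : ρ⁻¹ - 1 ≤ 2 * |ρ - 1| := by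
      have heq : ρ⁻¹ - 1 = (1 - ρ) / ρ := by field_simp
      rw [heq, div_le_iff₀ hρ]
      have h2 : 1 - ρ ≤ |ρ - 1| := by
        rw [abs_sub_comm]; exact le_abs_self _
      nlinarith [abs_nonneg (ρ - 1)]
    linarith
  · calc Real.log ρ ≤ ρ - 1 := Real.log_le_sub_one_of_pos hρ
      _ ≤ |ρ - 1| := le_abs_self _
      _ ≤ 2 * |ρ - 1| := by nlinarith [abs_nonneg (ρ - 1)]

/-- for A ∈ ℤ[z] with deg A = r_a and leading coefficient α,
d ≥ 2 and b ∈ ℝ with |b| > 1 such that A(b^{d^t}) ≠ 0 for all t ≥ 0, the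
product ∏_{t<m} A(b^{d^t}) is Θ(|α|^m |b|^{r_a(d^m-1)/(d-1)}) in m: the ratio
is bounded between two positive constants for all m ≥ 1. -/
theorem product_theta (A : Polynomial ℤ) (hA : A ≠ 0) (d : ℕ) (hd : 2 ≤ d)
    (b : ℝ) (hb : 1 < |b|) (hroot : ∀ t : ℕ, Polynomial.aeval (b ^ d ^ t) A ≠ 0) :
    ∃ c C : ℝ, 0 < c ∧ c < C ∧ ∀ m : ℕ, 1 ≤ m →
      c ≤ |∏ t ∈ Finset.range m, Polynomial.aeval (b ^ d ^ t) A| /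
          (|(A.leadingCoeff : ℝ)| ^ m * |b| ^ (A.natDegree * ((d ^ m - 1) / (d - 1)))) ∧
      |∏ t ∈ Finset.range m, Polynomial.aeval (b ^ d ^ t) A| /
          (|(A.leadingCoeff : ℝ)| ^ m * |b| ^ (A.natDegree * ((d ^ m - 1) / (d - 1)))) ≤ C := by
  classical
  set P : Polynomial ℝ := A.map (algebraMap ℤ ℝ) with hPdef
  have hinj : Function.Injective (algebraMap ℤ ℝ) := fun a b h => by
    have : (a : ℝ) = (b : ℝ) := h
    exact_mod_cast this
  have hP : P ≠ 0 := (Polynomial.map_ne_zero_iff hinj).mpr hA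
  have hdeg : P.natDegree = A.natDegree := Polynomial.natDegree_map_eq_of_injective hinj A
  have hlc : P.leadingCoeff = (A.leadingCoeff : ℝ) := Polynomial.leadingCoeff_map_of_injective hinj A
  have haev : ∀ y : ℝ, Polynomial.aeval y A = P.eval y := fun y => by
    rw [Polynomial.aeval_def, hPdef, Polynomial.eval_map]
  set r := A.natDegree with hr
  set α := |P.leadingCoeff| with hα
  have hα0 : 0 < α := abs_pos.mpr (Polynomial.leadingCoeff_ne_zero.mpr hP)
  set x : ℕ → ℝ := fun t => b ^ d ^ t with hxdef
  have hx1 : ∀ t, 1 < |x t| := by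
    intro t
    show 1 < |b ^ d ^ t|
    rw [abs_pow]
    exact one_lt_pow₀ hb (pow_pos (by omega : 0 < d) t).ne'
  have hxpos : ∀ t, 0 < |x t| := fun t => lt_trans one_pos (hx1 t)
  -- the normalized factors
  set ρ : ℕ → ℝ := fun t => |P.eval (x t)| / (α * |x t| ^ r) with hρdef
  have hρpos : ∀ t, 0 < ρ t := by
    intro t
    apply div_pos
    · rw [← haev]
      exact abs_pos.mpr (hroot t)
    · exact mul_pos hα0 (pow_pos (hxpos t) r)
  -- key estimate : |ρ t - 1| ≤ K / |x t|
  set Q : Polynomial ℝ := P.eraseLead with hQdef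
  set K : ℝ := (∑ i ∈ Finset.range (Q.natDegree + 1), |Q.coeff i|) / α with hKdef
  have hK0 : 0 ≤ K := by
    apply div_nonneg _ hα0.le
    exact Finset.sum_nonneg fun i _ => abs_nonneg _
  have key : ∀ t, |ρ t - 1| ≤ K / |x t| := by
    intro t
    have hxt : 1 ≤ |x t| := (hx1 t).le
    have hxt0 : (0:ℝ) < |x t| := hxpos t
    have hden : (0:ℝ) < α * |x t| ^ r := mul_pos hα0 (pow_pos hxt0 r)
    have hsplit : P.eval (x t) = Q.eval (x t) + P.leadingCoeff * (x t) ^ P.natDegree := by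
      conv_lhs => rw [← Polynomial.eraseLead_add_C_mul_X_pow P]
      rw [Polynomial.eval_add, Polynomial.eval_mul, Polynomial.eval_C,
        Polynomial.eval_pow, Polynomial.eval_X]
    have hQb : |Q.eval (x t)| ≤ (∑ i ∈ Finset.range (Q.natDegree + 1), |Q.coeff i|) * |x t| ^ Q.natDegree :=
      poly_eval_bound Q (x t) hxt
    have habs : |ρ t - 1| = abs (|P.eval (x t)| - α * |x t| ^ r) / (α * |x t| ^ r) := by
      show abs (|P.eval (x t)| / (α * |x t| ^ r) - 1) = _
      rw [div_sub_one hden.ne', abs_div, abs_of_pos hden]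
    rw [habs]
    have h1 : abs (|P.eval (x t)| - α * |x t| ^ r) ≤ |Q.eval (x t)| := by
      have : α * |x t| ^ r = |P.leadingCoeff * (x t) ^ P.natDegree| := by
        conv_rhs => rw [abs_mul, abs_pow]
        rw [hα, hdeg]
      rw [this]
      calc abs (|P.eval (x t)| - |P.leadingCoeff * x t ^ P.natDegree|)
          ≤ |P.eval (x t) - P.leadingCoeff * x t ^ P.natDegree| := abs_abs_sub_abs_le_abs_sub _ _
        _ = |Q.eval (x t)| := by rw [hsplit]; ring_nf
    rcases Nat.eq_zero_or_pos r with hr0 | hrpos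
    · -- r = 0 : Q = 0
      have hQ0 : Q = 0 := by
        rw [hQdef]
        have : P.natDegree = 0 := by rw [hdeg]; exact hr0
        obtain ⟨a, ha⟩ := Polynomial.natDegree_eq_zero.mp this
        rw [← ha]
        simp
      have : |Q.eval (x t)| = 0 := by rw [hQ0]; simp
      rw [div_le_div_iff₀ hden hxt0]
      nlinarith [h1, this, abs_nonneg (|P.eval (x t)| - α * |x t| ^ r), hK0,
        mul_pos hden hxt0, abs_nonneg (Q.eval (x t))]
    · -- r ≥ 1
      have hQd : Q.natDegree ≤ r - 1 := by
        rw [hQdef, ← hdeg]; exact Polynomial.eraseLead_natDegree_le P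
      have h2 : |Q.eval (x t)| ≤ (∑ i ∈ Finset.range (Q.natDegree + 1), |Q.coeff i|) * |x t| ^ (r - 1) := by
        refine hQb.trans ?_
        apply mul_le_mul_of_nonneg_left (pow_le_pow_right₀ hxt hQd)
        exact Finset.sum_nonneg fun i _ => abs_nonneg _
      have hpow : |x t| ^ r = |x t| ^ (r - 1) * |x t| := by
        rw [← pow_succ, Nat.sub_add_cancel hrpos]
      rw [div_le_div_iff₀ hden hxt0]
      calc abs (|P.eval (x t)| - α * |x t| ^ r) * |x t|
          ≤ (∑ i ∈ Finset.range (Q.natDegree + 1), |Q.coeff i|) * |x t| ^ (r - 1) * |x t| := by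
            apply mul_le_mul_of_nonneg_right (h1.trans h2) hxt0.le
        _ = K * (α * |x t| ^ r) := by
            rw [hKdef, hpow]
            field_simp
  -- geometric bound
  set q : ℝ := |b|⁻¹ with hqdef
  have hq0 : 0 < q := by rw [hqdef]; positivity
  have hq1 : q < 1 := by
    rw [hqdef, inv_lt_one_iff₀]
    right; exact hb
  have hgeo : ∀ t, K / |x t| ≤ K * q ^ (t + 1) := by
    intro t
    have : |x t| = |b| ^ d ^ t := by show |b ^ d ^ t| = _; rw [abs_pow]
    rw [div_eq_mul_inv, this, ← inv_pow]
    apply mul_le_mul_of_nonneg_left _ hK0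
    apply pow_le_pow_of_le_one hq0.le hq1.le
    exact Nat.succ_le_of_lt (Nat.lt_pow_self (n := t) (by omega))
  -- summability of logs
  have hsumg : Summable (fun t : ℕ => 2 * (K * q ^ (t + 1))) := by
    have : Summable (fun t : ℕ => q ^ t) := summable_geometric_of_lt_one hq0.le hq1
    exact (((this.mul_left q).mul_left K).mul_left 2).congr (fun t => by ring)
  have hev : ∀ᶠ t in Filter.atTop, ‖Real.log (ρ t)‖ ≤ 2 * (K * q ^ (t + 1)) := by
    have htend : Filter.Tendsto (fun t : ℕ => K * q ^ (t + 1)) Filter.atTop (nhds 0) := by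
      have : Filter.Tendsto (fun t : ℕ => q ^ t) Filter.atTop (nhds 0) :=
        tendsto_pow_atTop_nhds_zero_of_lt_one hq0.le hq1
      have := (this.const_mul (K * q)).comp (Filter.tendsto_id (α := ℕ))
      simpa [mul_comm, mul_assoc, pow_succ, mul_zero] using
        ((tendsto_pow_atTop_nhds_zero_of_lt_one hq0.le hq1).const_mul (K * q)).congr
          (fun t => by ring)
    have hsmall : ∀ᶠ t in Filter.atTop, K * q ^ (t + 1) ≤ 1 / 2 := by
      have := htend.eventually (eventually_le_nhds (by norm_num : (0:ℝ) < 1/2))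
      exact this
    filter_upwards [hsmall] with t ht
    have hρb : |ρ t - 1| ≤ 1 / 2 := ((key t).trans (hgeo t)).trans ht
    rw [Real.norm_eq_abs]
    calc |Real.log (ρ t)| ≤ 2 * |ρ t - 1| := abs_log_le_two_mul hρb
      _ ≤ 2 * (K * q ^ (t + 1)) := by
          have := (key t).trans (hgeo t); linarith
  have hsum : Summable (fun t : ℕ => Real.log (ρ t)) :=
    Summable.of_norm_bounded_eventually_nat hsumg hev
  -- partial sums are bounded
  obtain ⟨L, hL⟩ := hsum
  have htends : Filter.Tendsto (fun m => ∑ t ∈ Finset.range m, Real.log (ρ t))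
      Filter.atTop (nhds L) := hL.tendsto_sum_nat
  obtain ⟨ub, hub⟩ := htends.bddAbove_range
  obtain ⟨lb, hlb⟩ := htends.bddBelow_range
  have hub' : ∀ m, ∑ t ∈ Finset.range m, Real.log (ρ t) ≤ ub := fun m =>
    hub (Set.mem_range_self m)
  have hlb' : ∀ m, lb ≤ ∑ t ∈ Finset.range m, Real.log (ρ t) := fun m =>
    hlb (Set.mem_range_self m)
  refine ⟨Real.exp (lb - 1), Real.exp (ub + 1), Real.exp_pos _, ?_, ?_⟩
  · apply Real.exp_lt_exp.mpr
    have := (hlb' 0).trans (hub' 0)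
    linarith
  intro m _
  -- rewrite the ratio as ∏ ρ t
  have hratio : |∏ t ∈ Finset.range m, Polynomial.aeval (b ^ d ^ t) A| /
      (|(A.leadingCoeff : ℝ)| ^ m * |b| ^ (r * ((d ^ m - 1) / (d - 1)))) =
      ∏ t ∈ Finset.range m, ρ t := by
    have hnum : |∏ t ∈ Finset.range m, Polynomial.aeval (b ^ d ^ t) A| =
        ∏ t ∈ Finset.range m, |P.eval (x t)| := by
      rw [Finset.abs_prod]
      exact Finset.prod_congr rfl fun t _ => by rw [haev]
    have hden : |(A.leadingCoeff : ℝ)| ^ m * |b| ^ (r * ((d ^ m - 1) / (d - 1))) =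
        ∏ t ∈ Finset.range m, (α * |x t| ^ r) := by
      rw [← Nat.geomSum_eq hd m, Finset.mul_sum, ← Finset.prod_pow_eq_pow_sum,
        Finset.prod_mul_distrib, Finset.prod_const, Finset.card_range, hα, hlc]
      congr 1
      refine Finset.prod_congr rfl fun t _ => ?_
      show |b| ^ (r * d ^ t) = |x t| ^ r
      have : |x t| = |b| ^ d ^ t := by show |b ^ d ^ t| = _; rw [abs_pow]
      rw [this, ← pow_mul, mul_comm]
    rw [hnum, hden, ← Finset.prod_div_distrib]
  rw [hratio]
  have hprod : ∏ t ∈ Finset.range m, ρ t =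
      Real.exp (∑ t ∈ Finset.range m, Real.log (ρ t)) := by
    rw [Real.exp_sum]
    exact (Finset.prod_congr rfl fun t _ => (Real.exp_log (hρpos t)).symm)
  rw [hprod]
  constructor
  · exact Real.exp_le_exp.mpr (by linarith [hlb' m]) |>.trans_eq rfl
  · exact Real.exp_le_exp.mpr (by linarith [hub' m])
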